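/- arXiv:2511.17367 — 2 statements merged into one kernel-verified Lean document; each statement's English description precedes it below -/
import Mathlib

section
/- Suppose the synchronous-move pursuit-evasion game admits a pure-strategy Nash equilibrium, and let μ* and ν* be any stationary policies with μ*(s_p,s_e)∈argmin_{n_p∈N[s_p]} max_{n_e∈N[s_e]} D(n_p,n_e) and ν*(s_p,s_e)∈argmax_{n_e∈N[s_e]} min_{n_p∈N[s_p]} D(n_p,n_e). Then for every state s the synchronous play under (μ*,ν*) first reaches a state with f=1 exactly at time D(s): T^{μ*,ν*}(s)=D(s); equivalently, the equilibrium value satisfies V^{μ*,ν*}(s)=γ^{D(s)} (with γ^∞:=0). -/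
open scoped ENat

/-- Closed neighborhood `N[v]`: stay at `v` or cross one edge of `G`. -/
def closedNbr {V : Type*} (G : SimpleGraph V) (v : V) : Set V :=
  {u | u = v ∨ G.Adj v u}

/-- Joint pursuer moves: all `m` pursuers move simultaneously, each within a
closed neighborhood. -/
def jointNbr {V : Type*} (G : SimpleGraph V) {m : ℕ} (sp : Fin m → V) :
    Set (Fin m → V) :=
  {np | ∀ i, np i ∈ closedNbr G (sp i)}

/-- Capture sets `C_k`: `C_0 = {s | f s = 1}` and
`C_{k+1} = C_k ∪ {(s_p,s_e) | ∃ n_p ∈ N[s_p], ∀ n_e ∈ N[s_e], (n_p,n_e) ∈ C_k}`. -/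
def captureSet {V : Type*} (G : SimpleGraph V) {m : ℕ}
    (f : (Fin m → V) × V → Bool) : ℕ → Set ((Fin m → V) × V)
  | 0 => {s | f s = true}
  | k + 1 => captureSet G f k ∪
      {s | ∃ np ∈ jointNbr G s.1, ∀ ne ∈ closedNbr G s.2, (np, ne) ∈ captureSet G f k}

/-- The distance table `D(s) = min {k | s ∈ C_k}` (and `∞` if `s` lies in no `C_k`). -/
noncomputable def Dtab {V : Type*} (G : SimpleGraph V) {m : ℕ}
    (f : (Fin m → V) × V → Bool) (s : (Fin m → V) × V) : ℕ∞ :=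
  sInf {k : ℕ∞ | ∃ n : ℕ, k = n ∧ s ∈ captureSet G f n}

/-- `γ^d` for `d ∈ ℕ∪{∞}`, with the convention `γ^∞ = 0`. -/
noncomputable def gpow (γ : ℝ) (d : ℕ∞) : ℝ :=
  if d = ⊤ then 0 else γ ^ d.toNat

/-- A deterministic stationary pursuer policy is valid if `μ(s) ∈ N[s_p]`. -/
def ValidP {V : Type*} (G : SimpleGraph V) {m : ℕ}
    (μ : (Fin m → V) × V → (Fin m → V)) : Prop :=
  ∀ s, μ s ∈ jointNbr G s.1

/-- A deterministic stationary (synchronous) evader policy is valid if `ν(s) ∈ N[s_e]`. -/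
def ValidE {V : Type*} (G : SimpleGraph V) {m : ℕ}
    (ν : (Fin m → V) × V → V) : Prop :=
  ∀ s, ν s ∈ closedNbr G s.2

/-- The synchronous play from `s` under `(μ, ν)`: `s^0 = s` and
`s^{t+1} = (μ(s^t), ν(s^t))` while `f(s^t) = 0`; the play stops once `f = 1`. -/
def syncPlay {V : Type*} {m : ℕ} (f : (Fin m → V) × V → Bool)
    (μ : (Fin m → V) × V → (Fin m → V)) (ν : (Fin m → V) × V → V)
    (s : (Fin m → V) × V) : ℕ → (Fin m → V) × V
  | 0 => s
  | t + 1 =>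
      let c := syncPlay f μ ν s t
      if f c = true then c else (μ c, ν c)

/-- `T^{μ,ν}(s)`: the least `t` with `f(s^t) = 1` along the synchronous play
(`∞` if none). -/
noncomputable def syncT {V : Type*} {m : ℕ} (f : (Fin m → V) × V → Bool)
    (μ : (Fin m → V) × V → (Fin m → V)) (ν : (Fin m → V) × V → V)
    (s : (Fin m → V) × V) : ℕ∞ :=
  sInf {k : ℕ∞ | ∃ t : ℕ, k = t ∧ f (syncPlay f μ ν s t) = true}

/-- The discounted value `V^{μ,ν}(s) = γ^{T^{μ,ν}(s)}` (with `γ^∞ = 0`). -/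
noncomputable def syncV {V : Type*} {m : ℕ} (γ : ℝ) (f : (Fin m → V) × V → Bool)
    (μ : (Fin m → V) × V → (Fin m → V)) (ν : (Fin m → V) × V → V)
    (s : (Fin m → V) × V) : ℝ :=
  gpow γ (syncT f μ ν s)

/-- `(μ0, ν0)` is a pure-strategy Nash equilibrium of the synchronous-move game:
`V^{μ,ν0}(s) ≤ V^{μ0,ν0}(s) ≤ V^{μ0,ν}(s)` for all deterministic stationary policies
`μ, ν` and all states `s`. -/
def IsNash {V : Type*} (G : SimpleGraph V) {m : ℕ} (γ : ℝ)
    (f : (Fin m → V) × V → Bool)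
    (μ0 : (Fin m → V) × V → (Fin m → V)) (ν0 : (Fin m → V) × V → V) : Prop :=
  ValidP G μ0 ∧ ValidE G ν0 ∧
  (∀ μ, ValidP G μ → ∀ s, syncV γ f μ ν0 s ≤ syncV γ f μ0 ν0 s) ∧
  (∀ ν, ValidE G ν → ∀ s, syncV γ f μ0 ν0 s ≤ syncV γ f μ0 ν s)

/-- A DP pursuer policy: a stationary policy with
`μ*(s_p,s_e) ∈ argmin_{n_p ∈ N[s_p]} max_{n_e ∈ N[s_e]} D(n_p,n_e)`. -/
def IsDPPursuer {V : Type*} (G : SimpleGraph V) {m : ℕ}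
    (f : (Fin m → V) × V → Bool) (μ : (Fin m → V) × V → (Fin m → V)) : Prop :=
  ∀ s : (Fin m → V) × V, μ s ∈ jointNbr G s.1 ∧
    ∀ np ∈ jointNbr G s.1,
      (⨆ ne ∈ closedNbr G s.2, Dtab G f (μ s, ne)) ≤
        ⨆ ne ∈ closedNbr G s.2, Dtab G f (np, ne)

/-- A DP synchronous evader policy: a stationary policy with
`ν*(s_p,s_e) ∈ argmax_{n_e ∈ N[s_e]} min_{n_p ∈ N[s_p]} D(n_p,n_e)`. -/
def IsDPEvaderSync {V : Type*} (G : SimpleGraph V) {m : ℕ}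
    (f : (Fin m → V) × V → Bool) (ν : (Fin m → V) × V → V) : Prop :=
  ∀ s : (Fin m → V) × V, ν s ∈ closedNbr G s.2 ∧
    ∀ ne ∈ closedNbr G s.2,
      (⨅ np ∈ jointNbr G s.1, Dtab G f (np, ne)) ≤
        ⨅ np ∈ jointNbr G s.1, Dtab G f (np, ν s)


section Aux

variable {V : Type*} (G : SimpleGraph V) {m : ℕ} (f : (Fin m → V) × V → Bool)

lemma self_mem_closedNbr (v : V) : v ∈ closedNbr G v := Or.inl rfl

lemma captureSet_subset_succ (k : ℕ) : captureSet G f k ⊆ captureSet G f (k+1) :=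
  Set.subset_union_left

lemma captureSet_mono {j k : ℕ} (h : j ≤ k) : captureSet G f j ⊆ captureSet G f k := by
  induction k with
  | zero => interval_cases j; exact subset_rfl
  | succ k ih =>
    rcases Nat.lt_or_ge j (k+1) with h' | h'
    · exact (ih (Nat.lt_succ_iff.mp h')).trans (captureSet_subset_succ G f k)
    · have : j = k + 1 := le_antisymm h h'
      subst this; exact subset_rfl

lemma Dtab_le_iff {s : (Fin m → V) × V} {n : ℕ} :
    Dtab G f s ≤ (n : ℕ∞) ↔ s ∈ captureSet G f n := by
  constructor
  · intro h
    have hlt : Dtab G f s < ((n+1 : ℕ) : ℕ∞) :=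
      lt_of_le_of_lt h (by exact_mod_cast Nat.lt_succ_self n)
    rw [Dtab, sInf_lt_iff] at hlt
    obtain ⟨b, ⟨t, rfl, ht⟩, hb⟩ := hlt
    have htn : t ≤ n := Nat.lt_succ_iff.mp (by exact_mod_cast hb)
    exact captureSet_mono G f htn ht
  · intro h
    exact sInf_le ⟨n, rfl, h⟩

lemma exists_np {s : (Fin m → V) × V} (k : ℕ) (hs : s ∈ captureSet G f (k+1))
    (hf : f s = false) :
    ∃ np ∈ jointNbr G s.1, ∀ ne ∈ closedNbr G s.2, (np, ne) ∈ captureSet G f k := by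
  induction k with
  | zero =>
    rcases hs with hs | hs
    · exact absurd hs (by simp [captureSet, hf])
    · exact hs
  | succ k ih =>
    rcases hs with hs | hs
    · obtain ⟨np, h1, h2⟩ := ih hs
      exact ⟨np, h1, fun ne hne => captureSet_subset_succ G f k (h2 ne hne)⟩
    · exact hs

lemma syncPlay_of_capture (μ : (Fin m → V) × V → (Fin m → V)) (ν : (Fin m → V) × V → V)
    {s : (Fin m → V) × V} (h : f s = true) : ∀ t, syncPlay f μ ν s t = s
  | 0 => rfl
  | t+1 => by
      rw [syncPlay]
      simp [syncPlay_of_capture μ ν h t, h]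

lemma syncPlay_shift (μ : (Fin m → V) × V → (Fin m → V)) (ν : (Fin m → V) × V → V)
    {s : (Fin m → V) × V} (h : f s = false) :
    ∀ t, syncPlay f μ ν s (t+1) = syncPlay f μ ν (μ s, ν s) t
  | 0 => by simp [syncPlay, h]
  | t+1 => by
      rw [syncPlay, syncPlay_shift μ ν h t]
      rfl

lemma capture_of_decreasing (μ : (Fin m → V) × V → (Fin m → V)) (ν : (Fin m → V) × V → V)
    (H : ∀ t, f t = false → ∀ j : ℕ, t ∈ captureSet G f (j+1) →
      (μ t, ν t) ∈ captureSet G f j) :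
    ∀ (k : ℕ) (s : (Fin m → V) × V), s ∈ captureSet G f k →
      f (syncPlay f μ ν s k) = true := by
  intro k
  induction k with
  | zero => intro s hs; exact hs
  | succ k ih =>
    intro s hs
    cases hf : f s with
    | true => rw [syncPlay_of_capture f μ ν hf]; exact hf
    | false =>
      rw [syncPlay_shift f μ ν hf]
      exact ih _ (H s hf k hs)

lemma survival (μ : (Fin m → V) × V → (Fin m → V)) (ν : (Fin m → V) × V → V)
    (H : ∀ (j : ℕ) (t : (Fin m → V) × V), t ∉ captureSet G f (j+1) → f t = false →
      (μ t, ν t) ∉ captureSet G f j) :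
    ∀ (k : ℕ) (s : (Fin m → V) × V), s ∉ captureSet G f k →
      f (syncPlay f μ ν s k) = false := by
  intro k
  induction k with
  | zero =>
    intro s hs
    cases hf : f s with
    | true => exact absurd hf hs
    | false => exact hf
  | succ k ih =>
    intro s hs
    have hf : f s = false := by
      cases hf : f s with
      | true => exact absurd (captureSet_mono G f (Nat.zero_le _) hf) hs
      | false => rfl
    rw [syncPlay_shift f μ ν hf]
    exact ih _ (H k s hs hf)

lemma gpow_natCast (γ : ℝ) (n : ℕ) : gpow γ (n : ℕ∞) = γ ^ n := by
  rw [gpow, if_neg (by exact_mod_cast ENat.coe_ne_top n)]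
  simp

lemma gpow_lt {γ : ℝ} (hγ0 : 0 < γ) (hγ1 : γ < 1) {a b : ℕ∞} (h : a < b) :
    gpow γ b < gpow γ a := by
  induction a using ENat.recTopCoe with
  | top => exact absurd h (by simp)
  | coe n =>
    induction b using ENat.recTopCoe with
    | top =>
      rw [gpow_natCast, gpow, if_pos rfl]
      exact pow_pos hγ0 n
    | coe k =>
      rw [gpow_natCast, gpow_natCast]
      exact pow_lt_pow_right_of_lt_one₀ hγ0 hγ1 (by exact_mod_cast h)

lemma gpow_anti {γ : ℝ} (hγ0 : 0 < γ) (hγ1 : γ < 1) {a b : ℕ∞} (h : a ≤ b) :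
    gpow γ b ≤ gpow γ a := by
  rcases eq_or_lt_of_le h with rfl | h
  · exact le_rfl
  · exact (gpow_lt hγ0 hγ1 h).le

lemma le_of_gpow_le {γ : ℝ} (hγ0 : 0 < γ) (hγ1 : γ < 1) {a b : ℕ∞}
    (h : gpow γ a ≤ gpow γ b) : b ≤ a := by
  by_contra hc
  push_neg at hc
  exact absurd h (not_le.mpr (gpow_lt hγ0 hγ1 hc))

end Aux

/-- If the synchronous-move game admits a pure-strategy Nash equilibrium and
`(μ*, ν*)` is any pair of DP policies, then for every state `s` the synchronous play
under `(μ*, ν*)` first reaches a state with `f = 1` exactly at time `D(s)`: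
`T^{μ*,ν*}(s) = D(s)`; equivalently `V^{μ*,ν*}(s) = γ^{D(s)}` (with `γ^∞ = 0`). -/
theorem dp_play_capture_time_eq_D {V : Type*} [Fintype V] (G : SimpleGraph V)
    (m : ℕ) (hm : 1 ≤ m) (f : (Fin m → V) × V → Bool)
    (γ : ℝ) (hγ0 : 0 < γ) (hγ1 : γ < 1)
    (hNE : ∃ μ0 ν0, IsNash G γ f μ0 ν0)
    (μ : (Fin m → V) × V → (Fin m → V)) (hμ : IsDPPursuer G f μ)
    (ν : (Fin m → V) × V → V) (hν : IsDPEvaderSync G f ν) :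
    ∀ s : (Fin m → V) × V,
      syncT f μ ν s = Dtab G f s ∧ syncV γ f μ ν s = gpow γ (Dtab G f s) := by
  classical
  obtain ⟨μ0, ν0, hμ0v, hν0v, hNp, hNe⟩ := hNE
  -- one-step decrease property of the DP pursuer policy
  have hμdec : ∀ t, f t = false → ∀ j : ℕ, t ∈ captureSet G f (j+1) →
      ∀ ne ∈ closedNbr G t.2, (μ t, ne) ∈ captureSet G f j := by
    intro t hft j htj ne hne
    obtain ⟨np, hnp, hall⟩ := exists_np G f j htj hft
    have h1 : (⨆ ne ∈ closedNbr G t.2, Dtab G f (np, ne)) ≤ (j : ℕ∞) :=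
      iSup₂_le fun x hx => (Dtab_le_iff G f).mpr (hall x hx)
    have h2 := (hμ t).2 np hnp
    have h3 : Dtab G f (μ t, ne) ≤ (j : ℕ∞) :=
      le_trans (le_iSup₂ (f := fun x (_ : x ∈ closedNbr G t.2) => Dtab G f (μ t, x)) ne hne)
        (h2.trans h1)
    exact (Dtab_le_iff G f).mp h3
  -- the DP pursuer captures within D(s) steps against any valid evader
  have hcapμ : ∀ e, ValidE G e → ∀ s, syncT f μ e s ≤ Dtab G f s := by
    intro e he s
    rcases eq_top_or_lt_top (Dtab G f s) with hD | hD
    · rw [hD]; exact le_top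
    · obtain ⟨k, hk⟩ := WithTop.ne_top_iff_exists.mp hD.ne
      have hs : s ∈ captureSet G f k := (Dtab_le_iff G f).mp hk.ge
      have hcap := capture_of_decreasing G f μ e
        (fun t hft j htj => hμdec t hft j htj (e t) (he t)) k s hs
      calc syncT f μ e s ≤ (k : ℕ∞) := sInf_le ⟨k, rfl, hcap⟩
        _ = Dtab G f s := hk
  -- best-response evader against any fixed valid pursuer policy survives D(s) steps
  have hsurvbr : ∀ p, ValidP G p → ∃ e, ValidE G e ∧ ∀ s, Dtab G f s ≤ syncT f p e s := by
    intro p hp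
    have hex : ∀ s : (Fin m → V) × V, ∃ x ∈ closedNbr G s.2, ∀ y ∈ closedNbr G s.2,
        Dtab G f (p s, y) ≤ Dtab G f (p s, x) := by
      intro s
      obtain ⟨x, hx, hmax⟩ := Set.Finite.exists_maximalFor (fun ne => Dtab G f (p s, ne))
        (closedNbr G s.2) (Set.toFinite _) ⟨s.2, self_mem_closedNbr G s.2⟩
      refine ⟨x, hx, fun y hy => ?_⟩
      rcases le_total (Dtab G f (p s, y)) (Dtab G f (p s, x)) with h | h
      · exact h
      · exact hmax hy h
    choose e he1 he2 using hex
    refine ⟨e, he1, fun s => le_sInf ?_⟩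
    rintro b ⟨t, rfl, ht⟩
    by_contra hcon
    push_neg at hcon
    have hs : s ∉ captureSet G f t :=
      fun hmem => absurd ((Dtab_le_iff G f).mpr hmem) hcon.not_ge
    have hsv := survival G f p e ?_ t s hs
    · rw [ht] at hsv; exact Bool.true_eq_false.mp hsv
    · intro j u hu hfu hmem
      have hnot : ¬ ∀ ne ∈ closedNbr G u.2, (p u, ne) ∈ captureSet G f j := by
        intro hall
        exact hu (Or.inr ⟨p u, hp u, hall⟩)
      push_neg at hnot
      obtain ⟨ne, hne, hnem⟩ := hnot
      have h1 : Dtab G f (p u, ne) ≤ (j : ℕ∞) :=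
        le_trans (he2 u ne hne) ((Dtab_le_iff G f).mpr hmem)
      exact hnem ((Dtab_le_iff G f).mp h1)
  -- the Nash capture time equals D(s)
  have hT0 : ∀ s, syncT f μ0 ν0 s = Dtab G f s := by
    intro s
    obtain ⟨e, hev, hse⟩ := hsurvbr μ0 hμ0v
    have hle : syncT f μ0 ν0 s ≤ Dtab G f s := by
      have h1 : gpow γ (Dtab G f s) ≤ syncV γ f μ ν0 s :=
        gpow_anti hγ0 hγ1 (hcapμ ν0 hν0v s)
      have h2 := hNp μ (fun t => (hμ t).1) s
      exact le_of_gpow_le hγ0 hγ1 (le_trans h1 h2)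
    have hge : Dtab G f s ≤ syncT f μ0 ν0 s := by
      have h1 : syncV γ f μ0 ν0 s ≤ gpow γ (Dtab G f s) :=
        le_trans (hNe e hev s) (gpow_anti hγ0 hγ1 (hse s))
      exact le_of_gpow_le hγ0 hγ1 h1
    exact le_antisymm hle hge
  -- key lemma: no pursuer one-step move beats the DP table against ν0's move
  have hL9 : ∀ s : (Fin m → V) × V, f s = false → ∀ np ∈ jointNbr G s.1,
      Dtab G f s ≤ Dtab G f (np, ν0 s) + 1 := by
    intro s hfs np hnp
    by_contra hcon
    push_neg at hcon
    have hne : Dtab G f (np, ν0 s) ≠ ⊤ := by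
      intro h
      rw [h, top_add] at hcon
      exact absurd le_top (not_le.mpr hcon)
    obtain ⟨k, hk⟩ := WithTop.ne_top_iff_exists.mp hne
    rw [← hk] at hcon
    set μ'' : (Fin m → V) × V → (Fin m → V) := fun t => if t = s then np else μ t with hμ''def
    have hvalid : ValidP G μ'' := by
      intro t
      by_cases h : t = s
      · subst h; simpa [μ'', if_pos rfl] using hnp
      · simpa [μ'', if_neg h] using (hμ t).1
    have hdec : ∀ t, f t = false → ∀ j : ℕ, t ∈ captureSet G f (j+1) →
        (μ'' t, ν0 t) ∈ captureSet G f j := by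
      intro t hft j htj
      by_cases h : t = s
      · subst h
        have hDle : Dtab G f t ≤ ((j+1 : ℕ) : ℕ∞) := (Dtab_le_iff G f).mpr htj
        have hlt : ((k : ℕ∞) + 1) < ((j : ℕ∞) + 1) :=
          lt_of_lt_of_le hcon (by exact_mod_cast hDle)
        have hkj : k ≤ j := by
          have this : (k : ℕ∞) < (j : ℕ∞) := (WithTop.add_lt_add_iff_right (by simp : (1:ℕ∞) ≠ ⊤)).mp hlt
          exact_mod_cast this.le
        have hmem : (np, ν0 t) ∈ captureSet G f k := (Dtab_le_iff G f).mp hk.ge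
        simp only [μ'', if_pos rfl]
        exact captureSet_mono G f hkj hmem
      · simp only [μ'', if_neg h]
        exact hμdec t hft j htj (ν0 t) (hν0v t)
    have hstart : (np, ν0 s) ∈ captureSet G f k := (Dtab_le_iff G f).mp hk.ge
    have hcap := capture_of_decreasing G f μ'' ν0 hdec k (np, ν0 s) hstart
    have hplay : f (syncPlay f μ'' ν0 s (k+1)) = true := by
      rw [syncPlay_shift f μ'' ν0 hfs k]
      have heq : (μ'' s, ν0 s) = (np, ν0 s) := by simp [μ'']
      rw [heq]; exact hcap
    have hTle : syncT f μ'' ν0 s ≤ ((k+1 : ℕ) : ℕ∞) := sInf_le ⟨k+1, rfl, hplay⟩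
    have h1 : gpow γ (((k+1 : ℕ)) : ℕ∞) ≤ syncV γ f μ'' ν0 s := gpow_anti hγ0 hγ1 hTle
    have h2 : syncV γ f μ'' ν0 s ≤ syncV γ f μ0 ν0 s := hNp μ'' hvalid s
    have h3 : syncV γ f μ0 ν0 s = gpow γ (Dtab G f s) := by rw [syncV, hT0 s]
    have h4 : gpow γ (Dtab G f s) < gpow γ (((k+1 : ℕ)) : ℕ∞) := by
      apply gpow_lt hγ0 hγ1
      calc ((k+1 : ℕ) : ℕ∞) = (k : ℕ∞) + 1 := by push_cast; ring
        _ < Dtab G f s := hcon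
    rw [h3] at h2
    exact absurd (h1.trans h2) (not_le.mpr h4)
  -- safety of the DP evader against the DP pursuer
  have hνsafe : ∀ (j : ℕ) (t : (Fin m → V) × V), t ∉ captureSet G f (j+1) →
      f t = false → (μ t, ν t) ∉ captureSet G f j := by
    intro j t ht hft hmem
    have hDt : ((j : ℕ∞) + 1) < Dtab G f t := by
      by_contra h
      push_neg at h
      refine ht ((Dtab_le_iff G f).mp ?_)
      calc Dtab G f t ≤ (j : ℕ∞) + 1 := h
        _ = ((j+1 : ℕ) : ℕ∞) := by push_cast; ring
    have hlow : ∀ np ∈ jointNbr G t.1, ((j : ℕ∞) + 1) ≤ Dtab G f (np, ν0 t) := by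
      intro np hnp
      have h1 := hL9 t hft np hnp
      have h2 : ((j : ℕ∞) + 1) < Dtab G f (np, ν0 t) + 1 := lt_of_lt_of_le hDt h1
      have h3 : (j : ℕ∞) < Dtab G f (np, ν0 t) :=
        (WithTop.add_lt_add_iff_right (by simp : (1:ℕ∞) ≠ ⊤)).mp h2
      exact Order.add_one_le_of_lt h3
    have hinf : ((j : ℕ∞) + 1) ≤ ⨅ np ∈ jointNbr G t.1, Dtab G f (np, ν0 t) :=
      le_iInf₂ hlow
    have hinf2 := (hν t).2 (ν0 t) (hν0v t)
    have hfin : ((j : ℕ∞) + 1) ≤ Dtab G f (μ t, ν t) :=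
      le_trans (hinf.trans hinf2)
        (iInf₂_le (f := fun np (_ : np ∈ jointNbr G t.1) => Dtab G f (np, ν t)) (μ t) (hμ t).1)
    have hub : Dtab G f (μ t, ν t) ≤ (j : ℕ∞) := (Dtab_le_iff G f).mpr hmem
    have : ((j : ℕ∞) + 1) ≤ (j : ℕ∞) := hfin.trans hub
    have hj : (j + 1 : ℕ) ≤ j := by exact_mod_cast (by push_cast; exact this : ((j+1 : ℕ) : ℕ∞) ≤ ((j : ℕ) : ℕ∞))
    exact absurd hj (Nat.not_succ_le_self j)
  -- conclude
  intro s
  have hle := hcapμ ν (fun t => (hν t).1) s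
  have hge : Dtab G f s ≤ syncT f μ ν s := by
    refine le_sInf ?_
    rintro b ⟨t, rfl, ht⟩
    by_contra h
    push_neg at h
    have hs : s ∉ captureSet G f t :=
      fun hmem => absurd ((Dtab_le_iff G f).mpr hmem) h.not_ge
    have hsv := survival G f μ ν hνsafe t s hs
    rw [ht] at hsv
    exact Bool.true_eq_false.mp hsv
  have hTeq : syncT f μ ν s = Dtab G f s := le_antisymm hle hge
  exact ⟨hTeq, by rw [syncV, hTeq]⟩
end

section
/- Let (s^t) be any asynchronous play in which the evader's move at each step equals ν* applied to the current state and the pursuers' chosen move, while the pursuers' moves are arbitrary (possibly history-dependent). Then for every t such that f(s^τ)=0 for all τ<t, it holds that D(s^t)+t ≥ D(s^0) in ℕ∪{∞}; i.e., along any ν*-consistent asynchronous play the distance table decreases by at most one per step, and if D(s^0)=∞ then D(s^t)=∞ for all t. -/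
open scoped ENat

/-- A DP asynchronous evader policy: a stationary policy with
`ν*(s_p,s_e,n_p) ∈ argmax_{n_e ∈ N[s_e]} D(n_p,n_e)`. -/
def IsDPEvaderAsync {V : Type*} (G : SimpleGraph V) {m : ℕ}
    (f : (Fin m → V) × V → Bool)
    (ν : (Fin m → V) × V → (Fin m → V) → V) : Prop :=
  ∀ (s : (Fin m → V) × V) (np : Fin m → V), ν s np ∈ closedNbr G s.2 ∧
    ∀ ne ∈ closedNbr G s.2, Dtab G f (np, ne) ≤ Dtab G f (np, ν s np)

lemma captureSet_mono_s12 {V : Type*} (G : SimpleGraph V) {m : ℕ}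
    (f : (Fin m → V) × V → Bool) {k n : ℕ} (h : k ≤ n) :
    captureSet G f k ⊆ captureSet G f n := by
  induction n with
  | zero => simpa [Nat.le_zero.mp h] using Set.Subset.rfl
  | succ n ih =>
    rcases Nat.lt_or_ge k (n+1) with h' | h'
    · exact (ih (Nat.lt_succ_iff.mp h')).trans (Set.subset_union_left)
    · have : k = n + 1 := le_antisymm h h'
      simp [this]

lemma Dtab_le {V : Type*} (G : SimpleGraph V) {m : ℕ}
    (f : (Fin m → V) × V → Bool) {s : (Fin m → V) × V} {n : ℕ}
    (h : s ∈ captureSet G f n) : Dtab G f s ≤ (n : ℕ∞) :=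
  sInf_le ⟨n, rfl, h⟩

lemma mem_of_Dtab_le {V : Type*} (G : SimpleGraph V) {m : ℕ}
    (f : (Fin m → V) × V → Bool) {s : (Fin m → V) × V} {n : ℕ}
    (h : Dtab G f s ≤ (n : ℕ∞)) : s ∈ captureSet G f n := by
  have hne : {k : ℕ∞ | ∃ j : ℕ, k = j ∧ s ∈ captureSet G f j}.Nonempty := by
    by_contra hemp
    rw [Set.not_nonempty_iff_eq_empty] at hemp
    rw [Dtab, hemp, sInf_empty] at h
    exact absurd h (by simp)
  obtain ⟨j, hj, hmem⟩ := csInf_mem hne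
  have hjn : (j : ℕ∞) ≤ (n : ℕ∞) := hj ▸ h
  exact captureSet_mono_s12 G f (by exact_mod_cast hjn) hmem

lemma key_step {V : Type*} (G : SimpleGraph V) {m : ℕ}
    (f : (Fin m → V) × V → Bool) (ν : (Fin m → V) × V → (Fin m → V) → V)
    (hν : ∀ (s : (Fin m → V) × V) (np : Fin m → V), ν s np ∈ closedNbr G s.2 ∧
      ∀ ne ∈ closedNbr G s.2, Dtab G f (np, ne) ≤ Dtab G f (np, ν s np))
    (s : (Fin m → V) × V) (np : Fin m → V) (hnp : np ∈ jointNbr G s.1) :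
    Dtab G f s ≤ Dtab G f (np, ν s np) + 1 := by
  rcases eq_or_ne (Dtab G f (np, ν s np)) ⊤ with h | h
  · simp [h]
  · obtain ⟨n, hn⟩ := WithTop.ne_top_iff_exists.mp h
    rw [← hn]
    have hmem : s ∈ captureSet G f (n + 1) := by
      right
      refine ⟨np, hnp, fun ne hne => ?_⟩
      exact mem_of_Dtab_le G f (((hν s np).2 ne hne).trans (le_of_eq hn.symm))
    have := Dtab_le G f hmem
    calc Dtab G f s ≤ ((n + 1 : ℕ) : ℕ∞) := this
      _ = (n : ℕ∞) + 1 := by push_cast; ring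


/-- Along any asynchronous play in which the evader's move at each step equals `ν*`
applied to the current state and the pursuers' chosen move (the pursuers moving
arbitrarily): for every `t` with `f(s^τ) = 0` for all `τ < t` we have
`D(s^t) + t ≥ D(s^0)` in `ℕ∪{∞}` — the distance table decreases by at most one per
step — and if `D(s^0) = ∞` then `D(s^t) = ∞` for all `t`. -/
theorem dtab_decreases_at_most_one_along_dp_evader_play {V : Type*} [Fintype V]
    (G : SimpleGraph V) (m : ℕ) (hm : 1 ≤ m) (f : (Fin m → V) × V → Bool)
    (ν : (Fin m → V) × V → (Fin m → V) → V) (hν : IsDPEvaderAsync G f ν)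
    (σ : ℕ → (Fin m → V) × V)
    (hplay : ∀ t, f (σ t) = false →
      (σ (t + 1)).1 ∈ jointNbr G (σ t).1 ∧ (σ (t + 1)).2 = ν (σ t) ((σ (t + 1)).1)) :
    (∀ t : ℕ, (∀ τ < t, f (σ τ) = false) →
        Dtab G f (σ 0) ≤ Dtab G f (σ t) + (t : ℕ∞)) ∧
    (Dtab G f (σ 0) = ⊤ → ∀ t : ℕ, Dtab G f (σ t) = ⊤) := by
  have main : ∀ t : ℕ, (∀ τ < t, f (σ τ) = false) →
      Dtab G f (σ 0) ≤ Dtab G f (σ t) + (t : ℕ∞) := by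
    intro t
    induction t with
    | zero => intro _; simp
    | succ t ih =>
      intro hf
      have hIH := ih (fun τ hτ => hf τ (hτ.trans (Nat.lt_succ_self t)))
      have hft : f (σ t) = false := hf t (Nat.lt_succ_self t)
      obtain ⟨h1, h2⟩ := hplay t hft
      have hstep : Dtab G f (σ t) ≤ Dtab G f (σ (t + 1)) + 1 := by
        have := key_step G f ν hν (σ t) ((σ (t + 1)).1) h1
        rwa [← h2, Prod.mk.eta] at this
      calc Dtab G f (σ 0) ≤ Dtab G f (σ t) + (t : ℕ∞) := hIH
        _ ≤ (Dtab G f (σ (t + 1)) + 1) + (t : ℕ∞) := add_le_add_left hstep _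
        _ = Dtab G f (σ (t + 1)) + ((t + 1 : ℕ) : ℕ∞) := by
            push_cast; rw [add_assoc, add_comm 1]
  refine ⟨main, fun htop t => ?_⟩
  have hfall : ∀ t : ℕ, f (σ t) = false := by
    intro t
    induction t using Nat.strong_induction_on with
    | _ t ih =>
      by_contra hc
      have hft : f (σ t) = true := by
        cases h : f (σ t) with
        | false => exact absurd h hc
        | true => rfl
      have h0 : Dtab G f (σ t) = 0 := by
        have := Dtab_le G f (s := σ t) (n := 0) hft
        simpa using this
      have := main t ih
      rw [htop, h0, zero_add] at this
      exact absurd (top_le_iff.mp this) (by simp)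
  by_contra hc
  obtain ⟨n, hn⟩ := WithTop.ne_top_iff_exists.mp hc
  have hle := main t (fun τ _ => hfall τ)
  rw [htop, ← hn] at hle
  simp only [top_le_iff, WithTop.add_eq_top] at hle
  rcases hle with h | h <;> simp at h
end
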